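/- If B is a real symmetric positive semi-definite n×n matrix and B̂ = diag(B) is its diagonal part, then B ≤ 3 B̂ in the sense of quadratic forms provided each row of B has at most 3 nonzero entries; more generally, if each row of B has at most m nonzero entries then x^T B x ≤ m x^T B̂ x for all x. -/

import Mathlib

open Matrix

/-- Key lemma: for a PSD matrix, `B i j * a * b ≤ (B i i * a² + B j j * b²)/2`,
obtained from positivity of the quadratic form at `a • eᵢ - b • eⱼ`. -/
theorem keylem {n : Type*} [Fintype n] [DecidableEq n] (B : Matrix n n ℝ) (hB : B.PosSemidef)
    (i j : n) (a b : ℝ) :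
    B i j * a * b ≤ (B i i * a ^ 2 + B j j * b ^ 2) / 2 := by
  have h := hB.dotProduct_mulVec_nonneg (Pi.single i a - Pi.single j b)
  have hsym : B j i = B i j := by simpa using hB.1.apply i j
  simp only [star_trivial, dotProduct, mulVec, Pi.sub_apply, Pi.single_apply,
    mul_ite, ite_mul, mul_zero, zero_mul, mul_sub, sub_mul,
    Finset.sum_sub_distrib, Finset.sum_ite_eq', Finset.mem_univ, if_true] at h
  rw [hsym] at h
  nlinarith [h]

/-- a symmetric positive semi-definite matrix with at most `m`
nonzero entries per row is bounded by `m` times its diagonal part in the sense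
of quadratic forms (the case `m = 3` gives `B ≤ 3 B̂`). -/
theorem psd_bounded_by_diagonal
    {n : Type*} [Fintype n] [DecidableEq n]
    (B : Matrix n n ℝ) (hB : B.PosSemidef)
    (m : ℕ) (hsparse : ∀ i, {j | B i j ≠ 0}.ncard ≤ m) :
    ∀ x : n → ℝ, x ⬝ᵥ (B *ᵥ x) ≤ (m : ℝ) * (x ⬝ᵥ (Matrix.diagonal (fun i => B i i) *ᵥ x)) := by
  intro x
  classical
  have hBsym : ∀ i j, B j i = B i j := fun i j => by simpa using hB.1.apply i j
  set g : n → ℝ := fun i => B i i * x i ^ 2 with hg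
  have hg0 : ∀ i, 0 ≤ g i := by
    intro i
    have hBii : 0 ≤ B i i := by nlinarith [keylem B hB i i 1 (-1)]
    exact mul_nonneg hBii (sq_nonneg _)
  have hcard : ∀ i, ((Finset.univ : Finset n).filter (fun j => B i j ≠ 0)).card ≤ m := by
    intro i
    have := hsparse i
    rwa [Set.ncard_eq_toFinset_card', Set.toFinset_setOf] at this
  have inner : ∀ (p : n → Prop) (_ : DecidablePred p) (c : ℝ), 0 ≤ c →
      ((Finset.univ : Finset n).filter p).card ≤ m →
      ∑ j, (if p j then c else 0) ≤ (m : ℝ) * c := by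
    intro p hp c hc hcd
    rw [← Finset.sum_filter, Finset.sum_const, nsmul_eq_mul]
    exact mul_le_mul_of_nonneg_right (by exact_mod_cast hcd) hc
  have hA : ∑ i, ∑ j, (if B i j = 0 then (0:ℝ) else g i) ≤ (m : ℝ) * ∑ i, g i := by
    rw [Finset.mul_sum]
    apply Finset.sum_le_sum
    intro i _
    calc ∑ j, (if B i j = 0 then (0:ℝ) else g i)
        = ∑ j, (if B i j ≠ 0 then g i else 0) := by
          apply Finset.sum_congr rfl; intro j _
          by_cases h : B i j = 0 <;> simp [h]
      _ ≤ (m : ℝ) * g i := inner _ inferInstance (g i) (hg0 i) (hcard i)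
  have hC : ∑ i, ∑ j, (if B i j = 0 then (0:ℝ) else g j) ≤ (m : ℝ) * ∑ j, g j := by
    rw [Finset.sum_comm, Finset.mul_sum]
    apply Finset.sum_le_sum
    intro j _
    calc ∑ i, (if B i j = 0 then (0:ℝ) else g j)
        = ∑ i, (if B j i ≠ 0 then g j else 0) := by
          apply Finset.sum_congr rfl; intro i _
          rw [hBsym j i]
          by_cases h : B i j = 0 <;> simp [h]
      _ ≤ (m : ℝ) * g j := inner _ inferInstance (g j) (hg0 j) (hcard j)
  have hRHS : x ⬝ᵥ (Matrix.diagonal (fun i => B i i) *ᵥ x) = ∑ i, g i := by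
    simp [dotProduct, mulVec_diagonal, hg]
    apply Finset.sum_congr rfl; intro i _; ring
  rw [hRHS]
  calc x ⬝ᵥ (B *ᵥ x) = ∑ i, ∑ j, x i * (B i j * x j) := by
        simp [dotProduct, mulVec, Finset.mul_sum]
    _ ≤ ∑ i, ∑ j, (if B i j = 0 then (0:ℝ) else (g i + g j) / 2) := by
        apply Finset.sum_le_sum; intro i _
        apply Finset.sum_le_sum; intro j _
        by_cases h : B i j = 0
        · simp [h]
        · simp only [h, if_false, hg]
          have := keylem B hB i j (x i) (x j)
          nlinarith [this]
    _ = ((∑ i, ∑ j, (if B i j = 0 then (0:ℝ) else g i))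
        + (∑ i, ∑ j, (if B i j = 0 then (0:ℝ) else g j))) / 2 := by
        simp only [← Finset.sum_add_distrib, Finset.sum_div]
        apply Finset.sum_congr rfl; intro i _
        apply Finset.sum_congr rfl; intro j _
        by_cases h : B i j = 0 <;> simp [h]
    _ ≤ ((m : ℝ) * ∑ i, g i + (m : ℝ) * ∑ i, g i) / 2 := by
        apply div_le_div_of_nonneg_right ?_ (by norm_num)
        · exact add_le_add hA hC
    _ = (m : ℝ) * ∑ i, g i := by ring
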